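/- arXiv:1408.1970 — 4 statements merged into one kernel-verified Lean document; each statement's English description precedes it below -/
import Mathlib

section
/- Let (C, J) be a small site and X an object of C, and endow the over category C/X with the induced (over) topology J/X, in which a sieve on an object (f : Y → X) is covering if and only if its image under the forgetful functor C/X ⥤ C generates a J-covering sieve of Y. Then the restriction functor j* from the category of abelian sheaves on (C, J) to the category of abelian sheaves on (C/X, J/X), given by precomposition with the (opposite of the) forgetful functor, is well-defined and admits a left adjoint j_! which is an exact functor (it preserves finite limits and finite colimits of abelian sheaves). -/
set_option synthInstance.maxHeartbeats 1000000
set_option maxHeartbeats 1000000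


open CategoryTheory CategoryTheory.Limits

universe u

noncomputable section OverShriekAux

namespace OverShriekAux

variable {C : Type u} [SmallCategory C] (X : C)

/-- The functor from the discrete category on `K.unop ⟶ X` to the costructured arrow
category picking out the terminal object of each connected component. -/
def psi (K : Cᵒᵖ) : Discrete (K.unop ⟶ X) ⥤ CostructuredArrow (Over.forget X).op K :=
  Discrete.functor fun h =>
    CostructuredArrow.mk (Y := Opposite.op (Over.mk h)) (𝟙 K)

lemma psi_final (K : Cᵒᵖ) : (psi X K).Final := by
  constructor
  intro m
  have key : ∀ (a : StructuredArrow m (psi X K)),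
      a.right.as = m.hom.unop ≫ m.left.unop.hom := by
    intro a
    have w := CostructuredArrow.w a.hom
    have hleft : a.hom.left.unop.left = m.hom.unop := by
      have : ((Over.forget X).op.map a.hom.left) ≫ ((psi X K).obj a.right).hom = m.hom := w
      exact congrArg Quiver.Hom.unop ((Category.comp_id _).symm.trans this)
    have hw := Over.w a.hom.left.unop
    rw [hleft] at hw
    exact hw.symm
  have hne : Nonempty (StructuredArrow m (psi X K)) := by
    refine ⟨StructuredArrow.mk (Y := ⟨m.hom.unop ≫ m.left.unop.hom⟩)
      (CostructuredArrow.homMk ?_ ?_)⟩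
    · exact (Over.homMk m.hom.unop rfl :
        Over.mk (m.hom.unop ≫ m.left.unop.hom) ⟶ m.left.unop).op
    · exact Category.comp_id _
  apply zigzag_isConnected
  intro a b
  have hab : a.right = b.right := by
    apply Discrete.ext
    rw [key a, key b]
  refine Relation.ReflTransGen.single (Or.inl ⟨StructuredArrow.homMk (eqToHom hab) ?_⟩)
  apply CostructuredArrow.hom_ext
  apply Quiver.Hom.unop_inj
  apply Over.OverMorphism.ext
  have ha : a.hom.left.unop.left = m.hom.unop := by
    have : ((Over.forget X).op.map a.hom.left) ≫ ((psi X K).obj a.right).hom = m.hom :=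
      CostructuredArrow.w a.hom
    exact congrArg Quiver.Hom.unop ((Category.comp_id _).symm.trans this)
  have hb : b.hom.left.unop.left = m.hom.unop := by
    have : ((Over.forget X).op.map b.hom.left) ≫ ((psi X K).obj b.right).hom = m.hom :=
      CostructuredArrow.w b.hom
    exact congrArg Quiver.Hom.unop ((Category.comp_id _).symm.trans this)
  simp only [eqToHom_map, CostructuredArrow.comp_left, Comma.comp_left, unop_comp,
    Over.comp_left, CostructuredArrow.eqToHom_left, eqToHom_unop, Over.eqToHom_left,
    Category.assoc, ha, hb]
  simp [hab]
  exact Category.id_comp _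

lemma preservesFiniteLimits_colim_costructured (K : Cᵒᵖ) :
    PreservesFiniteLimits
      (colim (J := CostructuredArrow (Over.forget X).op K) (C := AddCommGrpCat.{u})) := by
  haveI : AB4 AddCommGrpCat.{u} := AB4.of_AB5 _
  haveI : (psi X K).Final := psi_final X K
  haveI : PreservesFiniteLimits
      ((Functor.whiskeringLeft (Discrete (K.unop ⟶ X)) _ AddCommGrpCat.{u}).obj (psi X K)) :=
    ⟨fun J _ _ => whiskeringLeft_preservesLimitsOfShape J _⟩
  haveI : PreservesFiniteLimits
      ((Functor.whiskeringLeft _ _ AddCommGrpCat.{u}).obj (psi X K) ⋙ colim) :=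
    comp_preservesFiniteLimits _ _
  exact preservesFiniteLimits_of_natIso (Functor.Final.colimIso (psi X K))

lemma lan_preservesFiniteLimits :
    PreservesFiniteLimits
      ((Over.forget X).op.lan : ((Over X)ᵒᵖ ⥤ AddCommGrpCat.{u}) ⥤ (Cᵒᵖ ⥤ AddCommGrpCat.{u})) := by
  apply preservesFiniteLimits_of_preservesFiniteLimitsOfSize.{u}
  intro J _ _
  apply preservesLimitsOfShape_of_evaluation
  intro K
  haveI := preservesFiniteLimits_colim_costructured X K
  haveI : PreservesLimitsOfShape J
      ((Functor.whiskeringLeft _ _ AddCommGrpCat.{u}).obj (CostructuredArrow.proj (Over.forget X).op K)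
        ⋙ colim) := by
    haveI : PreservesLimitsOfShape J
        ((Functor.whiskeringLeft _ _ AddCommGrpCat.{u}).obj (CostructuredArrow.proj (Over.forget X).op K)) :=
      whiskeringLeft_preservesLimitsOfShape J _
    infer_instance
  exact preservesLimitsOfShape_of_natIso (lanEvaluationIsoColim AddCommGrpCat.{u} _ _).symm

end OverShriekAux

end OverShriekAux

/-- Let `(C, J)` be a small site and `X : C`, and endow `C/X` with the induced (over)
topology `J.over X`.  The restriction functor `j*` on abelian sheaves, given by
precomposition with the (opposite of the) forgetful functor `C/X ⥤ C`, is well-defined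
and admits a left adjoint `j_!` which is exact (it preserves finite limits and finite
colimits). -/
theorem over_restriction_abelian_sheaves_has_exact_left_adjoint {C : Type u}
    [SmallCategory C] (J : GrothendieckTopology C) (X : C) :
    ∃ (jShriek : Sheaf (J.over X) AddCommGrpCat.{u} ⥤ Sheaf J AddCommGrpCat.{u})
      (_ : jShriek ⊣ (Over.forget X).sheafPushforwardContinuous AddCommGrpCat.{u} (J.over X) J),
      Nonempty (PreservesFiniteLimits jShriek) ∧ Nonempty (PreservesFiniteColimits jShriek) := by
  refine ⟨(Over.forget X).sheafPullback AddCommGrpCat.{u} (J.over X) J,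
    (Over.forget X).sheafAdjunctionContinuous AddCommGrpCat.{u} (J.over X) J, ⟨?_⟩, ⟨?_⟩⟩
  · haveI := OverShriekAux.lan_preservesFiniteLimits X
    haveI : PreservesFiniteLimits
        ((Over.forget X).op.lan ⋙ presheafToSheaf J AddCommGrpCat.{u}) :=
      comp_preservesFiniteLimits _ _
    haveI : PreservesFiniteLimits (Functor.sheafPullbackConstruction.sheafPullback
        (Over.forget X) AddCommGrpCat.{u} (J.over X) J) :=
      comp_preservesFiniteLimits _ _
    exact preservesFiniteLimits_of_natIso (((Over.forget X).sheafAdjunctionContinuous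
      AddCommGrpCat.{u} (J.over X) J).leftAdjointUniq
      (Functor.sheafPullbackConstruction.sheafAdjunctionContinuous
        (Over.forget X) AddCommGrpCat.{u} (J.over X) J)).symm
  · haveI : PreservesColimits ((Over.forget X).sheafPullback AddCommGrpCat.{u} (J.over X) J) :=
      ((Over.forget X).sheafAdjunctionContinuous
        AddCommGrpCat.{u} (J.over X) J).leftAdjoint_preservesColimits
    exact ⟨fun _ _ _ => inferInstance⟩
end

section
/- Let (C, J) be a small site and X an object of C, and endow the over category C/X with the induced (over) topology J/X. Then the restriction functor j* from abelian sheaves on (C, J) to abelian sheaves on (C/X, J/X), given by precomposition with the (opposite of the) forgetful functor, sends injective objects to injective objects: if E is an injective abelian sheaf on (C, J), then j*E is an injective abelian sheaf on (C/X, J/X). -/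
open CategoryTheory CategoryTheory.Limits

universe u

set_option synthInstance.maxHeartbeats 1000000
set_option maxHeartbeats 1600000

section Aux

variable {C : Type u} [SmallCategory C]

/-- The functor from the discrete category on `Y.unop ⟶ X` to the costructured arrow
category indexing the pointwise left Kan extension along `(Over.forget X).op`. -/
noncomputable def overLanIndex (X : C) (Y : Cᵒᵖ) :
    Discrete (Y.unop ⟶ X) ⥤ CostructuredArrow (Over.forget X).op Y :=
  Discrete.functor (fun g => CostructuredArrow.mk (Y := Opposite.op (Over.mk g)) (𝟙 Y))

instance overLanIndex_final (X : C) (Y : Cᵒᵖ) : (overLanIndex X Y).Final := by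
  constructor
  intro d
  have w₀ : (Over.forget X).op.map (Over.homMk (V := d.left.unop)
      d.hom.unop rfl : Over.mk (d.hom.unop ≫ d.left.unop.hom) ⟶ d.left.unop).op ≫
      ((overLanIndex X Y).obj ⟨d.hom.unop ≫ d.left.unop.hom⟩).hom = d.hom := by
    dsimp [overLanIndex]
    simp
    exact Category.comp_id _
  let o₀ : StructuredArrow d (overLanIndex X Y) :=
    StructuredArrow.mk (Y := Discrete.mk (d.hom.unop ≫ d.left.unop.hom))
      (CostructuredArrow.homMk (Over.homMk d.hom.unop rfl :
        Over.mk (d.hom.unop ≫ d.left.unop.hom) ⟶ d.left.unop).op w₀)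
  have uniq : ∀ o : StructuredArrow d (overLanIndex X Y), o = o₀ := by
    rintro ⟨⟨⟨⟩⟩, ⟨g⟩, φ⟩
    have hl : φ.left.unop.left = d.hom.unop := by
      have := φ.w
      dsimp [overLanIndex] at this
      exact congrArg Quiver.Hom.unop ((Category.comp_id _).symm.trans (this.trans (Category.comp_id _)))
    have hg : g = d.hom.unop ≫ d.left.unop.hom := by
      rw [← hl]
      exact (Over.w φ.left.unop).symm
    subst hg
    have hφ : φ = o₀.hom := by
      apply CostructuredArrow.hom_ext
      apply Quiver.Hom.unop_inj
      apply Over.OverMorphism.ext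
      rw [hl]
      rfl
    rw [hφ]
    rfl
  have : Nonempty (StructuredArrow d (overLanIndex X Y)) := ⟨o₀⟩
  exact IsConnected.of_induct (j₀ := o₀) (fun p hp _ j => by rw [uniq j]; exact hp)

section
variable {D H : Type*} [Category D] [Category H]

lemma lan_map_app_eq (L : C ⥤ D) [∀ F : C ⥤ H, L.HasPointwiseLeftKanExtension F]
    {F F' : C ⥤ H} (η : F ⟶ F') (Y : D) :
    (L.lan.map η).app Y =
      (L.leftKanExtensionObjIsoColimit F Y).hom ≫
        colimMap (Functor.whiskerLeft (CostructuredArrow.proj L Y) η) ≫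
        (L.leftKanExtensionObjIsoColimit F' Y).inv := by
  refine (Iso.inv_comp_eq _).1 ?_
  apply colimit.hom_ext
  intro f
  erw [Functor.ι_leftKanExtensionObjIsoColimit_inv_assoc, ι_colimMap_assoc,
    Functor.ι_leftKanExtensionObjIsoColimit_inv]
  have h1 : (L.leftKanExtension F).map f.hom ≫ (L.lan.map η).app Y =
      (L.lan.map η).app (L.obj f.left) ≫ (L.leftKanExtension F').map f.hom :=
    (L.lan.map η).naturality f.hom
  rw [h1]
  have h2 := congr_app (L.lanUnit.naturality η) f.left
  simp only [Functor.comp_obj, Functor.id_obj, Functor.comp_map, Functor.id_map,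
    Functor.whiskeringLeft_obj_obj, NatTrans.comp_app, Functor.whiskeringLeft_obj_map, Functor.whiskerLeft_app] at h2
  dsimp [Functor.lanUnit] at h2 ⊢
  exact ((reassoc_of% h2) _).symm

end

lemma mono_lan_map (X : C) {F F' : (Over X)ᵒᵖ ⥤ AddCommGrpCat.{u}} (η : F ⟶ F') [Mono η] :
    Mono ((Over.forget X).op.lan.map η) := by
  have main : ∀ Y : Cᵒᵖ, Mono (((Over.forget X).op.lan.map η).app Y) := by
   intro Y
   rw [lan_map_app_eq]
   set θ := Functor.whiskerLeft (CostructuredArrow.proj (Over.forget X).op Y) η with hθ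
   have hwm : Mono (Functor.whiskerLeft (overLanIndex X Y) θ) := by
    have : ∀ k, Mono ((Functor.whiskerLeft (overLanIndex X Y) θ).app k) := by
      intro k
      dsimp [θ]
      infer_instance
    exact NatTrans.mono_of_mono_app _
   have : AB4 AddCommGrpCat.{u} := AB4.of_AB5 AddCommGrpCat.{u}
   have key : Mono (colim.map (Functor.whiskerLeft (overLanIndex X Y) θ)) :=
    Functor.map_mono colim _
   have sq := colimit.pre_map (E := overLanIndex X Y) θ
   have hpre : Mono (colimMap θ) := by
    have : colim.map θ = inv (colimit.pre _ (overLanIndex X Y)) ≫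
        (colim.map (Functor.whiskerLeft (overLanIndex X Y) θ) ≫ colimit.pre _ (overLanIndex X Y)) := by
      rw [← sq, IsIso.inv_hom_id_assoc]
    have := this
    rw [show (colimMap θ : _) = colim.map θ from rfl, this]
    infer_instance
   refine @mono_comp _ _ _ _ _ _ ?_ _ (@mono_comp _ _ _ _ _ _ hpre _ ?_)
   · exact @IsIso.mono_of_iso _ _ _ _ _ (Iso.isIso_hom _)
   · exact @IsIso.mono_of_iso _ _ _ _ _ (Iso.isIso_inv _)
  exact NatTrans.mono_of_mono_app _

lemma overLan_preservesMonomorphisms (X : C) :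
    ((Over.forget X).op.lan :
      ((Over X)ᵒᵖ ⥤ AddCommGrpCat.{u}) ⥤ (Cᵒᵖ ⥤ AddCommGrpCat.{u})).PreservesMonomorphisms :=
  ⟨fun η _ => mono_lan_map X η⟩

lemma overSheafPullback_preservesMonomorphisms (J : GrothendieckTopology C) (X : C) :
    ((Over.forget X).sheafPullback AddCommGrpCat.{u} (J.over X) J).PreservesMonomorphisms := by
  have := overLan_preservesMonomorphisms (C := C) X
  have : (Functor.sheafPullbackConstruction.sheafPullback (Over.forget X) AddCommGrpCat.{u}
      (J.over X) J).PreservesMonomorphisms := by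
    unfold Functor.sheafPullbackConstruction.sheafPullback
    have : (sheafToPresheaf (J.over X) AddCommGrpCat.{u}).PreservesMonomorphisms := inferInstance
    have : (presheafToSheaf J AddCommGrpCat.{u}).PreservesMonomorphisms :=
      preservesMonomorphisms_of_preservesLimitsOfShape _
    infer_instance
  exact Functor.PreservesMonomorphisms.of_iso
    (Functor.sheafPullbackConstruction.sheafPullbackIso _ _ _ _).symm

end Aux

/-- Let `(C, J)` be a small site and `X : C`, and endow `C/X` with the induced (over)
topology `J.over X`.  The restriction functor `j*` on abelian sheaves, given by
precomposition with the (opposite of the) forgetful functor `C/X ⥤ C`, sends injective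
abelian sheaves to injective abelian sheaves. -/
theorem over_restriction_preserves_injective_abelian_sheaves {C : Type u}
    [SmallCategory C] (J : GrothendieckTopology C) (X : C)
    (E : Sheaf J AddCommGrpCat.{u}) (hE : Injective E) :
    Injective (((Over.forget X).sheafPushforwardContinuous AddCommGrpCat.{u}
      (J.over X) J).obj E) := by
  have : Injective E := hE
  have := overSheafPullback_preservesMonomorphisms J X
  exact Injective.injective_of_adjoint
    ((Over.forget X).sheafAdjunctionContinuous AddCommGrpCat.{u} (J.over X) J) E
end

section
/- Let C be a category with a terminal object and binary products, and let U be a subterminal object of C (i.e., every object of C admits at most one morphism to U; equivalently, the unique morphism U → ⊤ to the terminal object is a monomorphism). Let j* : C ⥤ C/U be the functor sending an object Y to the first projection fst : U ⨯ Y → U, viewed as an object of the over category C/U. If j* admits a right adjoint j_* : C/U ⥤ C, then j_* is fully faithful. -/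
open CategoryTheory CategoryTheory.Limits

universe v u

/-- The functor `j* : C ⥤ C/U` sending an object `Y` to the first projection
`fst : U ⨯ Y ⟶ U`, viewed as an object of the over category `C/U`. -/
@[simps]
noncomputable def jstarFunctor {C : Type u} [Category.{v} C] [HasBinaryProducts C] (U : C) :
    C ⥤ Over U where
  obj Y := Over.mk (prod.fst : U ⨯ Y ⟶ U)
  map {Y Z} f := Over.homMk (prod.map (𝟙 U) f) (by simp)

/-- Let `C` be a category with a terminal object and binary products, and let `U` be a
subterminal object of `C`.  If the functor `j* : C ⥤ C/U`, `Y ↦ (fst : U ⨯ Y ⟶ U)`,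
admits a right adjoint `j_* : C/U ⥤ C`, then `j_*` is fully faithful. -/
theorem right_adjoint_of_jstar_fully_faithful {C : Type u} [Category.{v} C]
    [HasTerminal C] [HasBinaryProducts C] (U : C) (hU : IsSubterminal U)
    (jLower : Over U ⥤ C) (adj : jstarFunctor U ⊣ jLower) :
    jLower.Full ∧ jLower.Faithful := by
  have hcomp : ∀ X : Over U, IsIso (adj.counit.app X) := by
    intro X
    -- the canonical comparison `j*(X.left) ⟶ X`, using subterminality
    let iXinv : (jstarFunctor U).obj X.left ⟶ X :=
      Over.homMk prod.snd (hU _ _)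
    let m : X.left ⟶ jLower.obj X := adj.homEquiv X.left X iXinv
    have hm : (jstarFunctor U).map m ≫ adj.counit.app X = iXinv := by
      have h := adj.homEquiv_counit (X := X.left) (Y := X) (g := m)
      rw [← h]
      simp [m]
    -- the inverse of the counit component
    let φ : X ⟶ (jstarFunctor U).obj (jLower.obj X) :=
      (Over.homMk (prod.lift X.hom (𝟙 X.left)) (by exact prod.lift_fst _ _) :
        X ⟶ (jstarFunctor U).obj X.left) ≫ (jstarFunctor U).map m
    -- key computation: `(counit.app X).left ≫ m = snd`
    have key : (adj.counit.app X).left ≫ m = (prod.snd : U ⨯ jLower.obj X ⟶ _) := by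
      apply (adj.homEquiv (U ⨯ jLower.obj X) X).symm.injective
      erw [Adjunction.homEquiv_counit, Adjunction.homEquiv_counit]
      have h1 : (jstarFunctor U).map ((adj.counit.app X).left ≫ m) =
          (jstarFunctor U).map (adj.counit.app X).left ≫ (jstarFunctor U).map m :=
        (jstarFunctor U).map_comp _ _
      erw [h1]
      erw [Category.assoc, hm]
      have h2 : (prod.snd : U ⨯ (U ⨯ jLower.obj X) ⟶ U ⨯ jLower.obj X) =
          prod.map (𝟙 U) prod.snd := by
        apply Limits.prod.hom_ext
        · exact hU _ _
        · simp
      ext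
      show prod.map (𝟙 U) (adj.counit.app X).left ≫ prod.snd =
        prod.map (𝟙 U) prod.snd ≫ (adj.counit.app X).left
      rw [prod.map_snd, ← h2]
      rfl
    refine ⟨φ, ?_, ?_⟩
    · -- counit ≫ φ = 𝟙
      ext
      change (adj.counit.app X).left ≫ prod.lift X.hom (𝟙 X.left) ≫ prod.map (𝟙 U) m =
        𝟙 (U ⨯ jLower.obj X)
      apply Limits.prod.hom_ext
      · simp only [Category.assoc, prod.map_fst, Category.comp_id, prod.lift_fst, Category.id_comp]
        erw [Category.id_comp]
        exact Over.w (adj.counit.app X)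
      · simp only [Category.assoc, prod.map_snd, prod.lift_snd_assoc, Category.id_comp]
        erw [Category.id_comp, Category.id_comp]
        exact key
    · -- φ ≫ counit = 𝟙
      have : φ ≫ adj.counit.app X =
          (Over.homMk (prod.lift X.hom (𝟙 X.left)) (by exact prod.lift_fst _ _) :
            X ⟶ (jstarFunctor U).obj X.left) ≫ iXinv := by
        rw [← hm]; exact Category.assoc _ _ _
      rw [this]
      ext
      exact prod.lift_snd _ _
  have : IsIso adj.counit := NatIso.isIso_of_isIso_app adj.counit
  have ff := adj.fullyFaithfulROfIsIsoCounit
  exact ⟨ff.full, ff.faithful⟩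
end

section
/- Let (C, J) be a small site and let T denote the category of sheaves of types on (C, J), which has all small limits and colimits. Let U be a subterminal object of T (every object of T admits at most one morphism to U). Let Z be the full subcategory of T consisting of those sheaves F for which the first projection fst : U ⨯ F → U is an isomorphism. Then: (1) for every sheaf F in T, the pushout i*F := U ⨿_{U ⨯ F} F of fst : U ⨯ F → U along snd : U ⨯ F → F belongs to Z; and (2) the assignment F ↦ i*F defines a left adjoint to the inclusion functor Z ↪ T, whose unit at F is the canonical morphism F → U ⨿_{U ⨯ F} F into the pushout. -/
open CategoryTheory CategoryTheory.Limits

universe u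

set_option maxHeartbeats 1000000

section Aux

variable {C : Type u} [SmallCategory C] {J : GrothendieckTopology C}
variable (U : Sheaf J (Type u))

/-- If `fst : U ⨯ G ⟶ U` is an isomorphism and `X` admits a morphism to `U`, then any
two morphisms `X ⟶ G` agree. -/
lemma key_unique (hU : IsSubterminal U) {G X : Sheaf J (Type u)}
    (hG : IsIso (prod.fst : U ⨯ G ⟶ U)) (w : X ⟶ U) (f g : X ⟶ G) : f = g := by
  haveI := hG
  have h : prod.lift w f = prod.lift w g := by
    rw [← cancel_mono (prod.fst : U ⨯ G ⟶ U)]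
    simp only [prod.lift_fst]
  calc f = prod.lift w f ≫ prod.snd := by simp only [prod.lift_snd]
    _ = prod.lift w g ≫ prod.snd := by rw [h]
    _ = g := by simp only [prod.lift_snd]

/-- The pushout `U ⨿_{U ⨯ F} F` lies in the closed complement of `U`. -/
lemma fst_pushout_isIso (hU : IsSubterminal U) (F : Sheaf J (Type u)) :
    IsIso (prod.fst :
      U ⨯ (pushout (prod.fst : U ⨯ F ⟶ U) (prod.snd : U ⨯ F ⟶ F)) ⟶ U) := by
  set P := pushout (prod.fst : U ⨯ F ⟶ U) (prod.snd : U ⨯ F ⟶ F) with hP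
  -- `U ⨯ -` is a left adjoint (cartesian closedness of sheaf categories), so it
  -- preserves the pushout.
  let tpIso : MonoidalCategory.tensorLeft U ≅ prod.functor.obj U :=
    NatIso.ofComponents (fun Y =>
      { hom := prod.lift (CartesianMonoidalCategory.fst U Y) (CartesianMonoidalCategory.snd U Y)
        inv := CartesianMonoidalCategory.lift prod.fst prod.snd
        hom_inv_id := by
          show prod.lift (CartesianMonoidalCategory.fst U Y) (CartesianMonoidalCategory.snd U Y) ≫
            (CartesianMonoidalCategory.lift prod.fst prod.snd :
              U ⨯ Y ⟶ MonoidalCategoryStruct.tensorObj U Y) = 𝟙 (MonoidalCategoryStruct.tensorObj U Y)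
          apply CartesianMonoidalCategory.hom_ext
          · rw [Category.assoc, CartesianMonoidalCategory.lift_fst, prod.lift_fst]
            exact (Category.id_comp _).symm
          · rw [Category.assoc, CartesianMonoidalCategory.lift_snd, prod.lift_snd]
            exact (Category.id_comp _).symm
        inv_hom_id := by
          show (CartesianMonoidalCategory.lift prod.fst prod.snd :
              U ⨯ Y ⟶ MonoidalCategoryStruct.tensorObj U Y) ≫
            prod.lift (CartesianMonoidalCategory.fst U Y) (CartesianMonoidalCategory.snd U Y) = 𝟙 (U ⨯ Y)
          apply Limits.prod.hom_ext
          · rw [Category.assoc, prod.lift_fst, CartesianMonoidalCategory.lift_fst, Category.id_comp]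
          · rw [Category.assoc, prod.lift_snd, CartesianMonoidalCategory.lift_snd, Category.id_comp] })
      (fun {X Y} f => by
        show MonoidalCategoryStruct.whiskerLeft U f ≫
            (prod.lift (CartesianMonoidalCategory.fst U Y) (CartesianMonoidalCategory.snd U Y) :
              MonoidalCategoryStruct.tensorObj U Y ⟶ U ⨯ Y) =
          (prod.lift (CartesianMonoidalCategory.fst U X) (CartesianMonoidalCategory.snd U X) :
              MonoidalCategoryStruct.tensorObj U X ⟶ U ⨯ X) ≫ prod.map (𝟙 U) f
        apply Limits.prod.hom_ext
        · rw [Category.assoc, Category.assoc, prod.lift_fst, prod.map_fst, Category.comp_id, prod.lift_fst]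
          exact CartesianMonoidalCategory.whiskerLeft_fst U f
        · rw [Category.assoc, Category.assoc, prod.lift_snd, prod.map_snd, prod.lift_snd_assoc]
          exact CartesianMonoidalCategory.whiskerLeft_snd U f)
  haveI : PreservesColimitsOfSize.{0, 0} (prod.functor.obj U) :=
    haveI := (ihom.adjunction U).leftAdjoint_preservesColimits
    preservesColimits_of_natIso tpIso
  have hpo : IsPushout (prod.fst : U ⨯ F ⟶ U) (prod.snd : U ⨯ F ⟶ F)
      (pushout.inl _ _) (pushout.inr _ _) := IsPushout.of_hasPushout _ _
  have hpo' := hpo.map (prod.functor.obj U)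
  -- key identity: `fst ≫ inl = snd : U ⨯ P ⟶ P`
  have hkey : (prod.fst : U ⨯ P ⟶ U) ≫ pushout.inl _ _ = (prod.snd : U ⨯ P ⟶ P) := by
    apply hpo'.hom_ext
    · show prod.map (𝟙 U) (pushout.inl _ _) ≫ _ = prod.map (𝟙 U) (pushout.inl _ _) ≫ _
      rw [prod.map_fst_assoc, prod.map_snd]
      simp only [Category.id_comp, Category.comp_id]
      rw [hU (prod.fst : U ⨯ U ⟶ U) (prod.snd : U ⨯ U ⟶ U)]
    · show prod.map (𝟙 U) (pushout.inr _ _) ≫ _ = prod.map (𝟙 U) (pushout.inr _ _) ≫ _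
      rw [prod.map_fst_assoc, prod.map_snd]
      simp only [Category.id_comp, Category.comp_id]
      exact pushout.condition
  refine ⟨prod.lift (𝟙 U) (pushout.inl _ _), ?_, by simp only [prod.lift_fst]⟩
  apply Limits.prod.hom_ext
  · simp only [Category.assoc, prod.lift_fst, Category.comp_id, Category.id_comp]
  · simp only [Category.assoc, prod.lift_snd, Category.id_comp]; exact hkey

end Aux

/-- Let `(C, J)` be a small site and `T` the category of sheaves of types on it.  Let `U` be
a subterminal object of `T` and let `Z` be the full subcategory of `T` of those sheaves `F`
for which `fst : U ⨯ F ⟶ U` is an isomorphism.  Then (1) for every sheaf `F`, the pushout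
`i*F := U ⨿_{U ⨯ F} F` of `fst` along `snd` belongs to `Z`; and (2) `F ↦ i*F` defines a
left adjoint to the inclusion `Z ↪ T`, whose unit at `F` is the canonical morphism
`F → U ⨿_{U ⨯ F} F` into the pushout. -/
theorem closed_complement_left_adjoint {C : Type u} [SmallCategory C]
    (J : GrothendieckTopology C) (U : Sheaf J (Type u)) (hU : IsSubterminal U) :
    (∀ F : Sheaf J (Type u),
      IsIso (prod.fst :
        U ⨯ (pushout (prod.fst : U ⨯ F ⟶ U) (prod.snd : U ⨯ F ⟶ F)) ⟶ U)) ∧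
    ∃ (L : Sheaf J (Type u) ⥤
        ObjectProperty.FullSubcategory (fun F : Sheaf J (Type u) => IsIso (prod.fst : U ⨯ F ⟶ U)))
      (adj : L ⊣ ObjectProperty.ι
        (fun F : Sheaf J (Type u) => IsIso (prod.fst : U ⨯ F ⟶ U))),
      ∀ F : Sheaf J (Type u),
        ∃ e : (ObjectProperty.ι
            (fun F : Sheaf J (Type u) => IsIso (prod.fst : U ⨯ F ⟶ U))).obj (L.obj F) ≅
            pushout (prod.fst : U ⨯ F ⟶ U) (prod.snd : U ⨯ F ⟶ F),
          adj.unit.app F ≫ e.hom =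
            pushout.inr (prod.fst : U ⨯ F ⟶ U) (prod.snd : U ⨯ F ⟶ F) := by
  refine ⟨fun F => fst_pushout_isIso U hU F, ?_⟩
  set Zp : Sheaf J (Type u) → Prop := fun F => IsIso (prod.fst : U ⨯ F ⟶ U) with hZp
  let Fobj : Sheaf J (Type u) → ObjectProperty.FullSubcategory Zp := fun F =>
    ⟨pushout (prod.fst : U ⨯ F ⟶ U) (prod.snd : U ⨯ F ⟶ F), fst_pushout_isIso U hU F⟩
  let e : ∀ (F : Sheaf J (Type u)) (G : ObjectProperty.FullSubcategory Zp),
      (Fobj F ⟶ G) ≃ (F ⟶ (ObjectProperty.ι Zp).obj G) := fun F G =>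
    { toFun := fun φ => pushout.inr _ _ ≫ φ.hom
      invFun := fun g => ObjectProperty.homMk <| pushout.desc
        (haveI : IsIso (prod.fst : U ⨯ G.obj ⟶ U) := G.property
         inv (prod.fst : U ⨯ G.obj ⟶ U) ≫ prod.snd) g
        (key_unique U hU G.property prod.fst _ _)
      left_inv := fun φ => by
        apply InducedCategory.hom_ext
        apply pushout.hom_ext
        · exact key_unique U hU G.property (𝟙 U) _ _
        · exact pushout.inr_desc _ _ _
      right_inv := fun g => by exact pushout.inr_desc _ _ _ }
  have he : ∀ (X : Sheaf J (Type u)) (Y Y' : ObjectProperty.FullSubcategory Zp) (g : Y ⟶ Y')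
      (h : Fobj X ⟶ Y), e X Y' (h ≫ g) = e X Y h ≫ (ObjectProperty.ι Zp).map g :=
    fun X Y Y' g h => by
      simp only [e, Equiv.coe_fn_mk]
      exact (Category.assoc _ _ _).symm
  refine ⟨Adjunction.leftAdjointOfEquiv e he, Adjunction.adjunctionOfEquivLeft e he,
    fun F => ⟨Iso.refl _, ?_⟩⟩
  simp only [Adjunction.adjunctionOfEquivLeft_unit_app, e, Equiv.coe_fn_mk, Iso.refl_hom]
  exact (Category.comp_id _).trans (Category.comp_id _)
end
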